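/- Let x be a skew-adjoint endomorphism of (V, B). For λ ∈ k let V_{(λ)} := ⋃_{m ≥ 1} ker (x − λ·1_V)^m denote the generalized eigenspace of x for λ. Then: (i) B(u, v) = 0 whenever u ∈ V_{(λ)}, v ∈ V_{(μ)} and μ ≠ −λ; (ii) for every λ, B restricts to a perfect pairing V_{(λ)} × V_{(−λ)} → k (for each nonzero u ∈ V_{(λ)} there is v ∈ V_{(−λ)} with B(u, v) ≠ 0, and symmetrically); in particular dim V_{(λ)} = dim V_{(−λ)}, and the restriction of B to V_{(0)} is nondegenerate. -/

import Mathlib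

/-- The generalized eigenspace `V_{(λ)} = ⋃_m ker (x - λ)^m`. -/
noncomputable def genEig {k V : Type*} [Field k] [AddCommGroup V] [Module k V]
    (x : Module.End k V) (lam : k) : Submodule k V :=
  ⨆ m : ℕ, LinearMap.ker ((x - lam • 1) ^ m)

lemma genEig_eq_maxGenEigenspace {k V : Type*} [Field k] [AddCommGroup V] [Module k V]
    (x : Module.End k V) (lam : k) : genEig x lam = x.maxGenEigenspace lam := by
  rw [genEig, ← Module.End.iSup_genEigenspace_eq]
  simp only [Module.End.genEigenspace_nat]

lemma mem_genEig {k V : Type*} [Field k] [AddCommGroup V] [Module k V]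
    (x : Module.End k V) (lam : k) (u : V) :
    u ∈ genEig x lam ↔ ∃ m : ℕ, ((x - lam • 1) ^ m) u = 0 := by
  rw [genEig_eq_maxGenEigenspace, Module.End.mem_maxGenEigenspace]

lemma orthAux {k V : Type*} [Field k] [AddCommGroup V] [Module k V]
    (B : LinearMap.BilinForm k V) (x : Module.End k V)
    (hskew : ∀ u v : V, B (x u) v = - B u (x v)) :
    ∀ N m n : ℕ, m + n ≤ N → ∀ lam mu : k, mu ≠ -lam → ∀ u v : V,
      ((x - lam • 1) ^ m) u = 0 → ((x - mu • 1) ^ n) v = 0 → B u v = 0 := by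
  intro N
  induction N with
  | zero =>
    intro m n hmn lam mu hne u v hu hv
    have hm : m = 0 := by omega
    subst hm
    simp only [pow_zero, Module.End.one_apply] at hu
    simp [hu]
  | succ N ih =>
    intro m n hmn lam mu hne u v hu hv
    match m, n with
    | 0, n =>
      simp only [pow_zero, Module.End.one_apply] at hu
      simp [hu]
    | m + 1, 0 =>
      simp only [pow_zero, Module.End.one_apply] at hv
      simp [hv]
    | m + 1, n + 1 =>
      have h1 : B ((x - lam • (1 : Module.End k V)) u) v = 0 := by
        apply ih m (n + 1) (by omega) lam mu hne _ _ _ hv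
        rw [← Module.End.mul_apply, ← pow_succ]
        exact hu
      have h2 : B u ((x - mu • (1 : Module.End k V)) v) = 0 := by
        apply ih (m + 1) n (by omega) lam mu hne u _ hu
        rw [← Module.End.mul_apply, ← pow_succ]
        exact hv
      have hmu : mu + lam ≠ 0 := fun h => hne (eq_neg_of_add_eq_zero_left h)
      simp only [LinearMap.sub_apply, LinearMap.smul_apply, Module.End.one_apply,
        map_sub, map_smul, LinearMap.sub_apply, LinearMap.smul_apply, smul_eq_mul] at h1 h2
      rw [hskew] at h1
      have key : (mu + lam) * B u v = 0 := by linear_combination -h1 - h2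
      exact (mul_eq_zero.mp key).resolve_left hmu

/-- For a skew-adjoint endomorphism `x` of `(V, B)`, the generalized eigenspaces for `λ`
and `μ` are `B`-orthogonal unless `μ = -λ`; `B` restricts to a perfect pairing between
`V_{(λ)}` and `V_{(-λ)}` (so their dimensions agree), and the restriction of `B` to
`V_{(0)}` is nondegenerate. -/
theorem statement14 (k V : Type*) [Field k] [IsAlgClosed k] [CharZero k]
    [AddCommGroup V] [Module k V] [FiniteDimensional k V]
    (B : LinearMap.BilinForm k V)
    (hsymm : ∀ u v : V, B u v = B v u)
    (hnd : LinearMap.BilinForm.Nondegenerate B)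
    (x : Module.End k V)
    (hskew : ∀ u v : V, B (x u) v = - B u (x v)) :
    (∀ lam mu : k, mu ≠ -lam →
      ∀ u ∈ genEig x lam, ∀ v ∈ genEig x mu, B u v = 0) ∧
    (∀ lam : k,
      (∀ u ∈ genEig x lam, u ≠ 0 → ∃ v ∈ genEig x (-lam), B u v ≠ 0) ∧
      (∀ v ∈ genEig x (-lam), v ≠ 0 → ∃ u ∈ genEig x lam, B u v ≠ 0) ∧
      Module.finrank k ↥(genEig x lam) = Module.finrank k ↥(genEig x (-lam))) ∧
    LinearMap.BilinForm.Nondegenerate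
      (B.domRestrict₁₂ (genEig x 0) (genEig x 0)) := by
  -- Part (i): orthogonality
  have horth : ∀ lam mu : k, mu ≠ -lam →
      ∀ u ∈ genEig x lam, ∀ v ∈ genEig x mu, B u v = 0 := by
    intro lam mu hne u hu v hv
    obtain ⟨m, hm⟩ := (mem_genEig x lam u).mp hu
    obtain ⟨n, hn⟩ := (mem_genEig x mu v).mp hv
    exact orthAux B x hskew (m + n) m n le_rfl lam mu hne u v hm hn
  -- Part (ii), left nondegeneracy of the pairing
  have key : ∀ lam : k, ∀ u ∈ genEig x lam, u ≠ 0 →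
      ∃ v ∈ genEig x (-lam), B u v ≠ 0 := by
    intro lam u hu hu0
    by_contra hc
    push_neg at hc
    apply hu0
    apply hnd.1
    intro w
    have hw : w ∈ ⨆ μ : k, x.maxGenEigenspace μ := by
      rw [Module.End.iSup_maxGenEigenspace_eq_top]; trivial
    have hle : (⨆ μ : k, x.maxGenEigenspace μ) ≤ LinearMap.ker (B u) := by
      apply iSup_le
      intro mu w' hw'
      rw [LinearMap.mem_ker]
      rw [← genEig_eq_maxGenEigenspace] at hw'
      rcases eq_or_ne mu (-lam) with h | h
      · subst h; exact hc w' hw'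
      · exact horth lam mu h u hu w' hw'
    exact hle hw
  have key' : ∀ lam : k, ∀ v ∈ genEig x (-lam), v ≠ 0 →
      ∃ u ∈ genEig x lam, B u v ≠ 0 := by
    intro lam v hv hv0
    obtain ⟨w, hw, hBw⟩ := key (-lam) v hv hv0
    rw [neg_neg] at hw
    exact ⟨w, hw, fun h => hBw (by rw [hsymm]; exact h)⟩
  -- dimension comparison
  have hdimle : ∀ lam : k,
      Module.finrank k ↥(genEig x lam) ≤ Module.finrank k ↥(genEig x (-lam)) := by
    intro lam
    set f := B.domRestrict₁₂ (genEig x lam) (genEig x (-lam)) with hf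
    have hinj : Function.Injective f := by
      rw [← LinearMap.ker_eq_bot, eq_bot_iff]
      intro u hu
      rw [LinearMap.mem_ker] at hu
      rw [Submodule.mem_bot]
      by_contra h0
      have hu0 : (u : V) ≠ 0 := fun h => h0 (Subtype.ext h)
      obtain ⟨v, hv, hBv⟩ := key lam (u : V) u.2 hu0
      apply hBv
      have := congrArg (fun g => g ⟨v, hv⟩) hu
      simpa [f, LinearMap.domRestrict₁₂_apply] using this
    calc Module.finrank k ↥(genEig x lam)
        ≤ Module.finrank k (Module.Dual k ↥(genEig x (-lam))) :=
          LinearMap.finrank_le_finrank_of_injective hinj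
      _ = Module.finrank k ↥(genEig x (-lam)) := Subspace.dual_finrank_eq
  refine ⟨horth, fun lam => ⟨key lam, key' lam, ?_⟩, ?_⟩
  · have h1 := hdimle lam
    have h2 := hdimle (-lam)
    rw [neg_neg] at h2
    omega
  refine ⟨?_, ?_⟩
  · intro u hu
    by_contra h0
    have hu0 : (u : V) ≠ 0 := fun h => h0 (Subtype.ext h)
    obtain ⟨v, hv, hBv⟩ := key 0 (u : V) u.2 hu0
    rw [neg_zero] at hv
    exact hBv (by simpa [LinearMap.domRestrict₁₂_apply] using hu ⟨v, hv⟩)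
  · intro v hv
    by_contra h0
    have hv0 : (v : V) ≠ 0 := fun h => h0 (Subtype.ext h)
    obtain ⟨u, hu', hBu⟩ := key' 0 (v : V) (by rw [neg_zero]; exact v.2) hv0
    exact hBu (by simpa [LinearMap.domRestrict₁₂_apply] using hv ⟨u, hu'⟩)
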